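/- Let Q be a finite simple graph with at least one edge and no isolated vertices, and let W be a fractional edge cover of Q. Let G be a finite simple graph with m edges. Then the number of injective graph homomorphisms from Q to G (injective maps f from the vertices of Q to the vertices of G such that {f(a), f(b)} is an edge of G whenever {a,b} is an edge of Q) is at most ∏_{e ∈ E(Q)} (2m)^{W(e)}. -/

import Mathlib

open Classical

/-- Real power with the convention that `0 ^ y = 0` for every exponent `y`
(in particular `0 ^ 0 = 0`); for nonzero base it is the usual real power. -/
noncomputable def pow0 (a y : ℝ) : ℝ := if a = 0 then 0 else Real.rpow a y

section AGMauxSection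

open MeasureTheory Finset Function
open scoped ENNReal

set_option linter.unusedSectionVars false
set_option linter.unusedVariables false
set_option maxHeartbeats 1000000

noncomputable section
namespace AGMaux

variable {α β : Type} [Fintype α] [Fintype β] [DecidableEq α]
variable [MeasurableSpace β] [MeasurableSingletonClass β]

lemma measAll (g : (α → β) → ℝ≥0∞) : Measurable g := measurable_of_countable g

lemma le_lintegral_count (H : β → ℝ≥0∞) (y : β) : H y ≤ ∫⁻ z, H z ∂Measure.count := by
  rw [lintegral_count]; exact ENNReal.le_tsum y

lemma lintegral_count_fintype (g : β → ℝ≥0∞) : ∫⁻ y, g y ∂Measure.count = ∑ y, g y := by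
  rw [lintegral_count, tsum_fintype]

lemma lmarginal_univ_eq_sum (F : (α → β) → ℝ≥0∞) (x₀ : α → β) :
    (∫⋯∫⁻_Finset.univ, F ∂(fun _ => (Measure.count : Measure β))) x₀ = ∑ f : α → β, F f := by
  rw [lmarginal_univ, lintegral_fintype]
  refine Finset.sum_congr rfl fun f _ => ?_
  have h1 : ({f} : Set (α → β)) = Set.pi Set.univ (fun i => ({f i} : Set β)) := by
    ext g; simp [Set.mem_pi, funext_iff, eq_comm]
  rw [h1, Measure.pi_pi]
  simp [Measure.count_singleton]

/-- Weighted Hölder over counting measure: if the weights sum to at least 1. -/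
lemma holder_count {ι : Type} (s : Finset ι) (H : ι → β → ℝ≥0∞) (w : ι → ℝ)
    (hw : ∀ i ∈ s, 0 < w i) (hsum : 1 ≤ ∑ i ∈ s, w i) :
    ∫⁻ y, ∏ i ∈ s, H i y ^ w i ∂Measure.count ≤
      ∏ i ∈ s, (∫⁻ y, H i y ∂Measure.count) ^ w i := by
  set C : ι → ℝ≥0∞ := fun i => ∫⁻ y, H i y ∂Measure.count with hC
  set S : ℝ := ∑ i ∈ s, w i with hS
  have hS0 : (0 : ℝ) < S := lt_of_lt_of_le one_pos hsum
  by_cases h0 : ∃ j ∈ s, C j = 0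
  · obtain ⟨j, hj, hj0⟩ := h0
    have hHj : ∀ y, H j y = 0 := fun y =>
      le_antisymm (hj0 ▸ le_lintegral_count (H j) y) zero_le
    have hz : ∀ y : β, ∏ i ∈ s, H i y ^ w i = 0 := fun y =>
      Finset.prod_eq_zero hj (by rw [hHj y]; exact ENNReal.zero_rpow_of_pos (hw j hj))
    simp [hz]
  push_neg at h0
  by_cases hinf : ∃ j ∈ s, C j = ∞
  · obtain ⟨j, hj, hjinf⟩ := hinf
    have : ∏ i ∈ s, C i ^ w i = ∞ := by
      rw [← Finset.mul_prod_erase s _ hj, hjinf, ENNReal.top_rpow_of_pos (hw j hj)]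
      rw [ENNReal.top_mul]
      intro h
      obtain ⟨i, hi, h2⟩ := Finset.prod_eq_zero_iff.mp h
      have hi' : i ∈ s := Finset.mem_of_mem_erase hi
      rcases ENNReal.rpow_eq_zero_iff.mp h2 with ⟨h3, _⟩ | ⟨h3, h4⟩
      · exact h0 i hi' h3
      · exact absurd h4 (not_lt.mpr (le_of_lt (hw i hi')))
    rw [this]; exact le_top
  push_neg at hinf
  -- main case: all C i ∈ (0, ∞)
  have hwS : ∀ i ∈ s, 0 ≤ w i - w i / S := by
    intro i hi
    have : w i / S ≤ w i := div_le_self (le_of_lt (hw i hi)) hsum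
    linarith
  have key : ∀ y, ∏ i ∈ s, H i y ^ w i ≤
      (∏ i ∈ s, C i ^ (w i - w i / S)) * ∏ i ∈ s, H i y ^ (w i / S) := by
    intro y
    rw [← Finset.prod_mul_distrib]
    refine Finset.prod_le_prod' fun i hi => ?_
    have h1 : H i y ^ w i = H i y ^ (w i - w i / S) * H i y ^ (w i / S) := by
      rw [← ENNReal.rpow_add_of_nonneg _ _ (hwS i hi)
        (le_of_lt (div_pos (hw i hi) hS0))]
      ring_nf
    rw [h1]
    exact mul_le_mul_of_nonneg_right
      (ENNReal.rpow_le_rpow (le_lintegral_count (H i) y) (hwS i hi)) zero_le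
  calc ∫⁻ y, ∏ i ∈ s, H i y ^ w i ∂Measure.count
      ≤ ∫⁻ y, (∏ i ∈ s, C i ^ (w i - w i / S)) * ∏ i ∈ s, H i y ^ (w i / S) ∂Measure.count :=
        lintegral_mono key
    _ = (∏ i ∈ s, C i ^ (w i - w i / S)) * ∫⁻ y, ∏ i ∈ s, H i y ^ (w i / S) ∂Measure.count :=
        lintegral_const_mul _ (measurable_of_countable _)
    _ ≤ (∏ i ∈ s, C i ^ (w i - w i / S)) * ∏ i ∈ s, C i ^ (w i / S) := by
        refine mul_le_mul_of_nonneg_left ?_ zero_le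
        refine ENNReal.lintegral_prod_norm_pow_le s
          (fun i _ => (measurable_of_countable _).aemeasurable) ?_ ?_
        · rw [← Finset.sum_div, ← hS, div_self hS0.ne']
        · exact fun i hi => le_of_lt (div_pos (hw i hi) hS0)
    _ = ∏ i ∈ s, C i ^ w i := by
        rw [← Finset.prod_mul_distrib]
        refine Finset.prod_congr rfl fun i hi => ?_
        rw [← ENNReal.rpow_add_of_nonneg _ _ (hwS i hi)
          (le_of_lt (div_pos (hw i hi) hS0))]
        ring_nf

/-- marginal is unchanged by updating a coordinate the integrand does not depend on -/
lemma lmarginal_update_of_indep {A S : Finset α} {g : (α → β) → ℝ≥0∞}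
    (hg : ∀ f f' : α → β, (∀ z ∈ A, f z = f' z) → g f = g f')
    {x : α} (hx : x ∉ A) (f : α → β) (y : β) :
    (∫⋯∫⁻_S, g ∂(fun _ => (Measure.count : Measure β))) (Function.update f x y)
      = (∫⋯∫⁻_S, g ∂(fun _ => (Measure.count : Measure β))) f := by
  unfold MeasureTheory.lmarginal
  refine lintegral_congr fun z => ?_
  refine hg _ _ fun a ha => ?_
  simp only [updateFinset]
  split
  · rfl
  · have hax : a ≠ x := by rintro rfl; exact hx ha
    exact Function.update_of_ne hax _ _

/-- Discrete Finner inequality. -/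
lemma finner {ι : Type} (A : ι → Finset α) (w : ι → ℝ) (s : Finset ι)
    (hw : ∀ i ∈ s, 0 < w i) :
    ∀ T : Finset α, ∀ F : ι → (α → β) → ℝ≥0∞,
      (∀ i ∈ s, ∀ f g : α → β, (∀ z ∈ A i, f z = g z) → F i f = F i g) →
      (∀ x ∈ T, 1 ≤ ∑ i ∈ s.filter (fun i => x ∈ A i), w i) →
      ∀ x₀ : α → β,
      (∫⋯∫⁻_T, (fun f => ∏ i ∈ s, F i f) ∂(fun _ => (Measure.count : Measure β))) x₀ ≤
        ∏ i ∈ s, ((∫⋯∫⁻_(A i ∩ T), (fun f => F i f ^ (1 / w i))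
            ∂(fun _ => (Measure.count : Measure β))) x₀) ^ w i := by
  intro T
  induction T using Finset.induction with
  | empty =>
    intro F hdep hcov x₀
    simp only [Finset.inter_empty, lmarginal_empty]
    have h : ∀ i ∈ s, (F i x₀ ^ (1 / w i)) ^ w i = F i x₀ := fun i hi => by
      rw [← ENNReal.rpow_mul, one_div_mul_cancel (hw i hi).ne', ENNReal.rpow_one]
    rw [Finset.prod_congr rfl h]
  | @insert x T' hx IH =>
    intro F hdep hcov x₀
    have hcov' : ∀ z ∈ T', 1 ≤ ∑ i ∈ s.filter (fun i => z ∈ A i), w i :=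
      fun z hz => hcov z (Finset.mem_insert_of_mem hz)
    rw [lmarginal_insert _ (measurable_of_countable _) hx]
    have step1 : ∫⁻ y, (∫⋯∫⁻_T', (fun f => ∏ i ∈ s, F i f)
          ∂(fun _ => (Measure.count : Measure β))) (update x₀ x y) ∂Measure.count
        ≤ ∫⁻ y, ∏ i ∈ s, ((∫⋯∫⁻_(A i ∩ T'), (fun f => F i f ^ (1 / w i))
            ∂(fun _ => (Measure.count : Measure β))) (update x₀ x y)) ^ w i ∂Measure.count :=
      lintegral_mono fun y => IH F hdep hcov' _
    refine le_trans step1 ?_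
    have hsplit : ∀ y : β, ∏ i ∈ s, ((∫⋯∫⁻_(A i ∩ T'), (fun f => F i f ^ (1 / w i))
            ∂(fun _ => (Measure.count : Measure β))) (update x₀ x y)) ^ w i
        = (∏ i ∈ s.filter (fun i => x ∈ A i), ((∫⋯∫⁻_(A i ∩ T'), (fun f => F i f ^ (1 / w i))
            ∂(fun _ => (Measure.count : Measure β))) (update x₀ x y)) ^ w i)
          * ∏ i ∈ s.filter (fun i => ¬ x ∈ A i), ((∫⋯∫⁻_(A i ∩ T'), (fun f => F i f ^ (1 / w i))
            ∂(fun _ => (Measure.count : Measure β))) x₀) ^ w i := by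
      intro y
      rw [← Finset.prod_filter_mul_prod_filter_not s (fun i => x ∈ A i)]
      congr 1
      refine Finset.prod_congr rfl fun i hi => ?_
      obtain ⟨his, hxi⟩ := Finset.mem_filter.mp hi
      have hdep' : ∀ f g : α → β, (∀ z ∈ A i, f z = g z) →
          F i f ^ (1 / w i) = F i g ^ (1 / w i) := fun f g h => by rw [hdep i his f g h]
      congr 1
      exact lmarginal_update_of_indep hdep' hxi x₀ y
    simp_rw [hsplit]
    rw [lintegral_mul_const _ (measurable_of_countable _)]
    have hhold : ∫⁻ y, ∏ i ∈ s.filter (fun i => x ∈ A i),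
          ((∫⋯∫⁻_(A i ∩ T'), (fun f => F i f ^ (1 / w i))
            ∂(fun _ => (Measure.count : Measure β))) (update x₀ x y)) ^ w i ∂Measure.count
        ≤ ∏ i ∈ s.filter (fun i => x ∈ A i),
            (∫⁻ y, (∫⋯∫⁻_(A i ∩ T'), (fun f => F i f ^ (1 / w i))
              ∂(fun _ => (Measure.count : Measure β))) (update x₀ x y) ∂Measure.count) ^ w i := by
      refine holder_count _ _ _ (fun i hi => hw i (Finset.mem_filter.mp hi).1) ?_
      exact hcov x (Finset.mem_insert_self x T')
    refine le_trans (mul_le_mul_of_nonneg_right hhold zero_le) (le_of_eq ?_)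
    rw [← Finset.prod_filter_mul_prod_filter_not s (fun i => x ∈ A i)]
    congr 1
    · refine Finset.prod_congr rfl fun i hi => ?_
      obtain ⟨his, hxi⟩ := Finset.mem_filter.mp hi
      have hxAT : x ∉ A i ∩ T' := fun h => hx (Finset.mem_of_mem_inter_right h)
      have hset : A i ∩ insert x T' = insert x (A i ∩ T') := by
        ext z
        simp only [Finset.mem_insert, Finset.mem_inter]
        constructor
        · rintro ⟨h1, rfl | h3⟩
          · exact Or.inl rfl
          · exact Or.inr ⟨h1, h3⟩
        · rintro (rfl | ⟨h1, h2⟩)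
          · exact ⟨hxi, Or.inl rfl⟩
          · exact ⟨h1, Or.inr h2⟩
      congr 1
      rw [hset, lmarginal_insert _ (measurable_of_countable _) hxAT x₀]
    · refine Finset.prod_congr rfl fun i hi => ?_
      obtain ⟨his, hxi⟩ := Finset.mem_filter.mp hi
      have hset : A i ∩ insert x T' = A i ∩ T' := by
        ext z
        simp only [Finset.mem_inter, Finset.mem_insert]
        constructor
        · rintro ⟨h1, rfl | h2⟩
          · exact absurd h1 hxi
          · exact ⟨h1, h2⟩
        · rintro ⟨h1, h2⟩; exact ⟨h1, Or.inr h2⟩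
      rw [hset]

end AGMaux
end

theorem injective_hom_count_agm_bound
    {α β : Type} [Fintype α] [Fintype β] [DecidableEq α] [DecidableEq β]
    (Q : SimpleGraph α) [DecidableRel Q.Adj]
    (G : SimpleGraph β) [DecidableRel G.Adj]
    (hQedge : Q.edgeFinset.Nonempty)
    (hQiso : ∀ x : α, ∃ y : α, Q.Adj x y)
    (W : Sym2 α → ℝ)
    (hW : ∀ e ∈ Q.edgeFinset, 0 ≤ W e)
    (hcov : ∀ x : α, 1 ≤ ∑ e ∈ Q.edgeFinset.filter (fun e => x ∈ e), W e) :
    ({f : α → β | Function.Injective f ∧ ∀ a b : α, Q.Adj a b → G.Adj (f a) (f b)}.ncard : ℝ)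
      ≤ ∏ e ∈ Q.edgeFinset, pow0 ((2 * G.edgeFinset.card : ℕ) : ℝ) (W e) := by
  have hedge : ∃ a b : α, Q.Adj a b := by
    obtain ⟨e₀, he₀⟩ := hQedge
    rw [SimpleGraph.mem_edgeFinset] at he₀
    induction e₀ using Sym2.ind with
    | _ a b => exact ⟨a, b, he₀⟩
  rcases Nat.eq_zero_or_pos G.edgeFinset.card with hm0 | hmpos
  · -- G has no edges: both sides are 0
    have hSempty : {f : α → β | Function.Injective f ∧
        ∀ a b : α, Q.Adj a b → G.Adj (f a) (f b)} = ∅ := by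
      ext f
      simp only [Set.mem_setOf_eq, Set.mem_empty_iff_false, iff_false, not_and]
      intro _ hf
      obtain ⟨a, b, hab⟩ := hedge
      have hmem : s(f a, f b) ∈ G.edgeFinset :=
        SimpleGraph.mem_edgeFinset.mpr (hf a b hab)
      rw [Finset.card_eq_zero.mp hm0] at hmem
      exact absurd hmem (Finset.notMem_empty _)
    obtain ⟨e₀, he₀⟩ := hQedge
    have hz : ∏ e ∈ Q.edgeFinset, pow0 ((2 * G.edgeFinset.card : ℕ) : ℝ) (W e) = 0 :=
      Finset.prod_eq_zero he₀ (by simp [pow0, hm0])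
    rw [hSempty, hz]
    simp
  · -- main case
    letI : MeasurableSpace β := ⊤
    haveI : MeasurableSingletonClass β := ⟨fun _ => MeasurableSpace.measurableSet_top⟩
    obtain ⟨eG, heG⟩ := Finset.card_pos.mp hmpos
    have hGne : Nonempty β := by
      rw [SimpleGraph.mem_edgeFinset] at heG
      revert heG
      induction eG using Sym2.ind with
      | _ u v => exact fun _ => ⟨u⟩
    obtain ⟨u₀⟩ := hGne
    set x₀ : α → β := fun _ => u₀ with hx₀
    set m : ℕ := G.edgeFinset.card with hm
    -- data for Finner
    set E' : Finset (Sym2 α) := Q.edgeFinset.filter (fun e => 0 < W e) with hE'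
    set A : Sym2 α → Finset α := fun e => Finset.univ.filter (fun z => z ∈ e) with hA
    set F : Sym2 α → (α → β) → ℝ≥0∞ :=
      (fun e f => if Sym2.map f e ∈ G.edgeSet then 1 else 0) with hF
    have hmapdep : ∀ (e : Sym2 α) (f g : α → β),
        (∀ z ∈ A e, f z = g z) → Sym2.map f e = Sym2.map g e := by
      intro e
      induction e using Sym2.ind with
      | _ a b =>
        intro f g hfg
        rw [Sym2.map_pair_eq, Sym2.map_pair_eq,
          hfg a (by simp [hA]), hfg b (by simp [hA])]
    have hdep : ∀ e ∈ E', ∀ f g : α → β, (∀ z ∈ A e, f z = g z) → F e f = F e g := by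
      intro e _ f g h
      simp only [hF, hmapdep e f g h]
    have hwpos : ∀ e ∈ E', 0 < W e := fun e he => (Finset.mem_filter.mp he).2
    have hcovE : ∀ x : α, ∀ _ : x ∈ Finset.univ,
        1 ≤ ∑ e ∈ E'.filter (fun e => x ∈ A e), W e := by
      intro x _
      have hsub : E'.filter (fun e => x ∈ A e) ⊆ Q.edgeFinset.filter (fun e => x ∈ e) := by
        intro e he
        simp only [hE', hA, Finset.mem_filter, Finset.mem_univ, true_and] at he ⊢
        exact ⟨he.1.1, he.2⟩
      have heq : ∑ e ∈ E'.filter (fun e => x ∈ A e), W e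
          = ∑ e ∈ Q.edgeFinset.filter (fun e => x ∈ e), W e := by
        refine Finset.sum_subset hsub fun e hbig hnot => ?_
        obtain ⟨heQ, hxe⟩ := Finset.mem_filter.mp hbig
        by_contra hne
        have hWpos : 0 < W e := lt_of_le_of_ne (hW e heQ) (Ne.symm hne)
        exact hnot (Finset.mem_filter.mpr
          ⟨Finset.mem_filter.mpr ⟨heQ, hWpos⟩, by simp [hA, hxe]⟩)
      rw [heq]; exact hcov x
    have main := AGMaux.finner A W E' hwpos Finset.univ F hdep hcovE x₀
    -- lower bound the LHS of `main` by the number of injective homomorphisms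
    set SS : Set (α → β) := {f : α → β | Function.Injective f ∧
        ∀ a b : α, Q.Adj a b → G.Adj (f a) (f b)} with hSS
    have hFone : ∀ f ∈ SS, ∀ e ∈ E', F e f = 1 := by
      intro f hf e he
      have he' : e ∈ Q.edgeSet := SimpleGraph.mem_edgeFinset.mp (Finset.mem_filter.mp he).1
      have hmem : Sym2.map f e ∈ G.edgeSet := by
        revert he'
        induction e using Sym2.ind with
        | _ a b =>
          intro h
          rw [Sym2.map_pair_eq]
          exact hf.2 a b h
      simp only [hF]
      rw [if_pos hmem]
    have hcount : ((SS.ncard : ℝ≥0∞)) ≤ ∑ f : α → β, ∏ e ∈ E', F e f := by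
      have hfin : SS.toFinset = Finset.univ.filter (fun f => f ∈ SS) := by
        ext f; simp
      have h1 : (SS.ncard : ℝ≥0∞) = ∑ f ∈ SS.toFinset, (1 : ℝ≥0∞) := by
        rw [Finset.sum_const, nsmul_eq_mul, mul_one, Set.ncard_eq_toFinset_card']
      rw [h1]
      have h2 : ∑ f ∈ SS.toFinset, (1 : ℝ≥0∞) = ∑ f ∈ SS.toFinset, ∏ e ∈ E', F e f := by
        refine Finset.sum_congr rfl fun f hf => ?_
        rw [Set.mem_toFinset] at hf
        exact (Finset.prod_eq_one (fun e he => hFone f hf e he)).symm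
      rw [h2]
      exact Finset.sum_le_sum_of_subset (Finset.subset_univ _)
    rw [AGMaux.lmarginal_univ_eq_sum] at main
    -- evaluate the RHS factors
    have hRHS : ∀ e ∈ E',
        ((∫⋯∫⁻_(A e ∩ Finset.univ), (fun f => F e f ^ (1 / W e))
          ∂(fun _ => (Measure.count : Measure β))) x₀) = ((2 * m : ℕ) : ℝ≥0∞) := by
      intro e he
      have hediag : ¬ e.IsDiag :=
        SimpleGraph.not_isDiag_of_mem_edgeSet Q
          (SimpleGraph.mem_edgeFinset.mp (Finset.mem_filter.mp he).1)
      have hWe : 0 < W e := (Finset.mem_filter.mp he).2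
      have hpow : (fun f => F e f ^ (1 / W e)) = F e := by
        funext f
        simp only [hF]
        split
        · exact ENNReal.one_rpow _
        · exact ENNReal.zero_rpow_of_pos (by positivity)
      rw [Finset.inter_univ, hpow]
      revert hediag
      induction e using Sym2.ind with
      | _ a b =>
        intro hediag
        have hab : a ≠ b := fun h => hediag (Sym2.mk_isDiag_iff.mpr h)
        have hAab : A s(a, b) = ({a, b} : Finset α) := by
          ext z
          simp [hA, Sym2.mem_iff]
        have hanb : a ∉ ({b} : Finset α) := by simp [hab]
        rw [hAab, show ({a, b} : Finset α) = insert a {b} from rfl,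
          lmarginal_insert _ (measurable_of_countable _) hanb]
        have hinner : ∀ u : β,
            (∫⋯∫⁻_({b} : Finset α), (fun f => F s(a, b) f)
              ∂(fun _ => (Measure.count : Measure β))) (update x₀ a u)
            = ∑ v : β, if G.Adj u v then (1 : ℝ≥0∞) else 0 := by
          intro u
          rw [lmarginal_singleton]
          dsimp only
          rw [AGMaux.lintegral_count_fintype]
          refine Finset.sum_congr rfl fun v _ => ?_
          simp only [hF, Sym2.map_pair_eq, SimpleGraph.mem_edgeSet]
          have hva : update (update x₀ a u) b v a = u := by
            rw [Function.update_of_ne hab, Function.update_self]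
          have hvb : update (update x₀ a u) b v b = v := Function.update_self _ _ _
          rw [hva, hvb]
        rw [AGMaux.lintegral_count_fintype]
        have : ∀ u : β, (∫⋯∫⁻_({b} : Finset α), (fun f => F s(a, b) f)
              ∂(fun _ => (Measure.count : Measure β))) (update x₀ a u)
            = ((G.degree u : ℝ≥0∞)) := by
          intro u
          rw [hinner u]
          rw [Finset.sum_boole]
          congr 1
          rw [SimpleGraph.degree, SimpleGraph.neighborFinset_eq_filter]
        rw [Finset.sum_congr rfl fun u _ => this u]
        rw [← Nat.cast_sum]
        rw [SimpleGraph.sum_degrees_eq_twice_card_edges]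
    have main2 : ((SS.ncard : ℝ≥0∞)) ≤ ∏ e ∈ E', ((2 * m : ℕ) : ℝ≥0∞) ^ W e := by
      refine le_trans hcount (le_trans main (le_of_eq ?_))
      exact Finset.prod_congr rfl fun e he => by rw [hRHS e he]
    -- pass to the reals
    have hfin : ∏ e ∈ E', ((2 * m : ℕ) : ℝ≥0∞) ^ W e ≠ ∞ := by
      refine (ENNReal.prod_lt_top fun e he => ?_).ne
      exact ENNReal.rpow_lt_top_of_nonneg (hW e (Finset.mem_filter.mp he).1)
        (ENNReal.natCast_ne_top _)
    have hreal := ENNReal.toReal_mono hfin main2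
    rw [ENNReal.toReal_natCast, ENNReal.toReal_prod] at hreal
    have hbase : ((2 * m : ℕ) : ℝ) ≠ 0 := by positivity
    have hRe : ∀ e ∈ E', (((2 * m : ℕ) : ℝ≥0∞) ^ W e).toReal
        = pow0 ((2 * m : ℕ) : ℝ) (W e) := by
      intro e he
      rw [← ENNReal.toReal_rpow, ENNReal.toReal_natCast]
      simp only [pow0, if_neg hbase]
      rfl
    rw [Finset.prod_congr rfl hRe] at hreal
    refine le_trans hreal (le_of_eq ?_)
    refine Finset.prod_subset (Finset.filter_subset _ _) fun e heQ hne => ?_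
    have hW0 : W e = 0 := by
      by_contra h
      exact hne (Finset.mem_filter.mpr ⟨heQ, lt_of_le_of_ne (hW e heQ) (Ne.symm h)⟩)
    simp only [pow0, hW0, if_neg hbase]
    exact Real.rpow_zero _

end AGMauxSection
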